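/- arXiv:1903.07156 — 2 statements merged into one kernel-verified Lean document; each statement's English description precedes it below -/
import Mathlib

section
/- Under Assumption x ⪰ 0 (all components of x nonnegative), the set of x ∈ ℝⁿ with x ⪰ 0 for which there exist δ_A ∈ ℝ^{m×n} with ‖δ_A‖_∞ ≤ Δ_A (entrywise) such that ‖Q_y − (Q_A − δ_A)x‖_∞ ≤ Δ_y equals the set of x ⪰ 0 satisfying the linear inequalities (Q_A − Δ_A·𝟙_m𝟙_nᵀ)x ⪯ Q_y + Δ_y·𝟙_m and (−Q_A − Δ_A·𝟙_m𝟙_nᵀ)x ⪯ −Q_y + Δ_y·𝟙_m. -/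
open Finset Matrix

theorem lp_reformulation (m n : ℕ) (QA : Matrix (Fin m) (Fin n) ℝ)
    (Qy : Fin m → ℝ) (ΔA Δy : ℝ) (hΔA : 0 < ΔA) (hΔy : 0 < Δy) :
    {x : Fin n → ℝ | (∀ j, 0 ≤ x j) ∧
        ∃ δ : Matrix (Fin m) (Fin n) ℝ, (∀ i j, |δ i j| ≤ ΔA) ∧
          ∀ i, |Qy i - ((QA - δ).mulVec x) i| ≤ Δy} =
      {x : Fin n → ℝ | (∀ j, 0 ≤ x j) ∧
        (∀ i, ∑ j, (QA i j - ΔA) * x j ≤ Qy i + Δy) ∧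
        (∀ i, ∑ j, (-QA i j - ΔA) * x j ≤ -Qy i + Δy)} := by
  ext x
  simp only [Set.mem_setOf_eq]
  constructor
  · rintro ⟨hx, δ, hδ, hfeas⟩
    refine ⟨hx, ?_, ?_⟩
    · intro i
      have h := hfeas i
      have hmv : ((QA - δ).mulVec x) i = ∑ j, (QA i j - δ i j) * x j := by
        simp [Matrix.mulVec, dotProduct, Matrix.sub_apply]
      rw [hmv, abs_le] at h
      have h1 : ∑ j, (QA i j - ΔA) * x j ≤ ∑ j, (QA i j - δ i j) * x j := by
        apply Finset.sum_le_sum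
        intro j _
        have h2 := (abs_le.mp (hδ i j)).2
        nlinarith [hx j]
      linarith [h.1]
    · intro i
      have h := hfeas i
      have hmv : ((QA - δ).mulVec x) i = ∑ j, (QA i j - δ i j) * x j := by
        simp [Matrix.mulVec, dotProduct, Matrix.sub_apply]
      rw [hmv, abs_le] at h
      have h1 : ∑ j, (-QA i j - ΔA) * x j ≤ ∑ j, -((QA i j - δ i j) * x j) := by
        apply Finset.sum_le_sum
        intro j _
        have h2 := (abs_le.mp (hδ i j)).1
        nlinarith [hx j]
      rw [Finset.sum_neg_distrib] at h1
      linarith [h.2]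
  · rintro ⟨hx, h1, h2⟩
    refine ⟨hx, ?_⟩
    set S := ∑ j, x j with hS
    have hS0 : 0 ≤ S := Finset.sum_nonneg fun j _ => hx j
    set δ0 : Matrix (Fin m) (Fin n) ℝ := fun i j => max (-ΔA) (min ΔA
      (if S = 0 then 0 else -(Qy i - ∑ j, QA i j * x j) / S)) with hδ0
    refine ⟨δ0, ?_, ?_⟩
    · intro i j
      rw [hδ0, abs_le]
      exact ⟨le_max_left _ _, max_le (by linarith) (min_le_left _ _)⟩
    · intro i
      set r : ℝ := Qy i - ∑ j, QA i j * x j with hr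
      set t : ℝ := max (-ΔA) (min ΔA (if S = 0 then 0 else -r / S)) with ht
      have hmv : ((QA - δ0).mulVec x) i
          = (∑ j, QA i j * x j) - t * S := by
        rw [hS, Finset.mul_sum, ← Finset.sum_sub_distrib]
        simp only [Matrix.mulVec, dotProduct]
        refine Finset.sum_congr rfl fun j _ => ?_
        rw [Matrix.sub_apply, sub_mul]
      rw [hmv]
      have e1 : ∑ j, (QA i j - ΔA) * x j = (∑ j, QA i j * x j) - ΔA * S := by
        simp only [sub_mul, Finset.sum_sub_distrib, Finset.mul_sum, hS]
      have e2 : ∑ j, (-QA i j - ΔA) * x j = -(∑ j, QA i j * x j) - ΔA * S := by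
        simp only [sub_mul, neg_mul, Finset.sum_sub_distrib, Finset.sum_neg_distrib,
          Finset.mul_sum, hS]
      have h1i := h1 i; rw [e1] at h1i
      have h2i := h2 i; rw [e2] at h2i
      rw [abs_le]
      rcases eq_or_lt_of_le hS0 with hSe | hSpos
      · have hAS : ΔA * S = 0 := by rw [← hSe]; ring
        have hts : t * S = 0 := by rw [← hSe]; ring
        constructor <;> [skip; skip] <;> rw [hts] <;> simp only [hr] at * <;> linarith
      · have hSne : S ≠ 0 := ne_of_gt hSpos
        have htv : t = max (-ΔA) (min ΔA (-r / S)) := by rw [ht, if_neg hSne]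
        rcases le_or_gt (-r / S) (-ΔA) with hc1 | hc1
        · have ht1 : t = -ΔA := by
            rw [htv, min_eq_right (by linarith), max_eq_left hc1]
          have hrb : ΔA * S ≤ r := by
            have := (div_le_iff₀ hSpos).mp hc1
            nlinarith
          rw [ht1]
          constructor <;> nlinarith
        · rcases le_or_gt ΔA (-r / S) with hc2 | hc2
          · have ht1 : t = ΔA := by
              rw [htv, min_eq_left hc2, max_eq_right (by linarith)]
            have hrb : r ≤ -(ΔA * S) := by
              have := (le_div_iff₀ hSpos).mp hc2
              nlinarith
            rw [ht1]
            constructor <;> nlinarith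
          · have ht1 : t = -r / S := by
              rw [htv, min_eq_right hc2.le, max_eq_right hc1.le]
            have : t * S = -r := by rw [ht1]; field_simp
            rw [this]
            constructor <;> nlinarith
end

section
/- Let Q_A ∈ ℝ^{m×n}, Q_y ∈ ℝ^m, Δ_A, Δ_y > 0, and x ∈ ℝⁿ with x ⪰ 0. If Q_A·x − Δ_A·(𝟙_nᵀx)·𝟙_m ⪯ Q_y + Δ_y·𝟙_m and −Q_A·x − Δ_A·(𝟙_nᵀx)·𝟙_m ⪯ −Q_y + Δ_y·𝟙_m, then there exists δ_A ∈ ℝ^{m×n} with |（δ_A)_{ij}| ≤ Δ_A for all i,j such that ‖Q_y − (Q_A − δ_A)·x‖_∞ ≤ Δ_y. -/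
open Finset Matrix

theorem lp_to_perturbation (m n : ℕ) (QA : Matrix (Fin m) (Fin n) ℝ)
    (Qy : Fin m → ℝ) (ΔA Δy : ℝ) (hΔA : 0 < ΔA) (hΔy : 0 < Δy)
    (x : Fin n → ℝ) (hx : ∀ j, 0 ≤ x j)
    (h1 : ∀ i, QA.mulVec x i - ΔA * (∑ j, x j) ≤ Qy i + Δy)
    (h2 : ∀ i, -QA.mulVec x i - ΔA * (∑ j, x j) ≤ -Qy i + Δy) :
    ∃ δ : Matrix (Fin m) (Fin n) ℝ, (∀ i j, |δ i j| ≤ ΔA) ∧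
      ∀ i, |Qy i - ((QA - δ).mulVec x) i| ≤ Δy := by
  set S : ℝ := ∑ j, x j with hS
  have hS0 : 0 ≤ S := Finset.sum_nonneg fun j _ => hx j
  rcases eq_or_lt_of_le hS0 with hS0' | hSpos
  · -- S = 0, hence all x j = 0
    have hxz : ∀ j, x j = 0 := by
      intro j
      have := (Finset.sum_eq_zero_iff_of_nonneg (fun j _ => hx j)).mp hS0'.symm
      exact this j (Finset.mem_univ j)
    refine ⟨0, fun i j => by simp [abs_nonneg, le_of_lt hΔA], fun i => ?_⟩
    have hmv : ∀ (M : Matrix (Fin m) (Fin n) ℝ), M.mulVec x i = 0 := by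
      intro M
      simp [Matrix.mulVec, dotProduct, hxz]
    have h1' := h1 i
    have h2' := h2 i
    rw [hmv QA] at h1' h2'
    rw [hmv (QA - 0)]
    rw [← hS0'] at h1' h2'
    rw [abs_le]
    constructor <;> linarith
  · -- S > 0
    set c : Fin m → ℝ := fun i => max (-(ΔA * S)) (min (ΔA * S) (Qy i - QA.mulVec x i)) with hc
    have hcb : ∀ i, |c i| ≤ ΔA * S := by
      intro i
      rw [abs_le]
      constructor
      · exact le_max_left _ _
      · exact max_le (by nlinarith) (min_le_left _ _)
    refine ⟨Matrix.of fun i j => -(c i) / S, fun i j => ?_, fun i => ?_⟩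
    · simp only [Matrix.of_apply]
      rw [abs_div, abs_neg, abs_of_pos hSpos, div_le_iff₀ hSpos]
      exact hcb i
    · have hmv : (QA - Matrix.of fun i j => -(c i) / S).mulVec x i
          = QA.mulVec x i + c i := by
        rw [Matrix.sub_mulVec]
        simp only [Matrix.mulVec, dotProduct, Pi.sub_apply, Matrix.of_apply]
        have : ∑ j, -(c i) / S * x j = -(c i) := by
          rw [← Finset.mul_sum, ← hS, div_mul_cancel₀]
          exact ne_of_gt hSpos
        simp only [this]
        ring
      rw [hmv]
      set r := Qy i - QA.mulVec x i with hr
      have h1' : -(Δy + ΔA * S) ≤ r := by have := h1 i; rw [hr]; linarith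
      have h2' : r ≤ Δy + ΔA * S := by have := h2 i; rw [hr]; linarith
      have hgoal : |r - c i| ≤ Δy := by
        rcases le_total r (-(ΔA * S)) with h | h
        · have : c i = -(ΔA * S) := by
            rw [hc]
            simp only
            rw [min_eq_right (by nlinarith), max_eq_left (by nlinarith)]
          rw [this, abs_le]; constructor <;> linarith
        · rcases le_total (ΔA * S) r with h' | h'
          · have : c i = ΔA * S := by
              rw [hc]; simp only
              rw [min_eq_left h', max_eq_right (by nlinarith)]
            rw [this, abs_le]; constructor <;> linarith
          · have : c i = r := by
              rw [hc]; simp only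
              rw [min_eq_right h', max_eq_right h]
            rw [this]; simp; linarith
      calc |Qy i - (QA.mulVec x i + c i)| = |r - c i| := by rw [hr]; ring_nf
        _ ≤ Δy := hgoal
end
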